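/- Let u be a classical solution of the target system with continuous coefficient λ satisfying λ(x,t) ≥ λ̲ > 0. Then for every τ > 0, every p ∈ [1, ∞) and every t > 0, the function t ↦ ∫₀¹ ρ_τ(u(x,t))^p dx is differentiable and satisfies d/dt ∫₀¹ ρ_τ(u(x,t))^p dx ≤ -λ̲·p·∫₀¹ ρ_τ(u(x,t))^p dx + (3/8)·τ·p·∫₀¹ λ(x,t)·ρ_τ(u(x,t))^{p-1} dx. -/

import Mathlib

open MeasureTheory

/-- The approximation function `ρ_τ`. -/
noncomputable def rho (τ s : ℝ) : ℝ :=
  if τ ≤ |s| then |s| else -s ^ 4 / (8 * τ ^ 3) + 3 * s ^ 2 / (4 * τ) + 3 * τ / 8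


open intervalIntegral

noncomputable def rhoD (τ s : ℝ) : ℝ :=
  if τ ≤ |s| then (if s < 0 then -1 else 1) else s * (3 * τ ^ 2 - s ^ 2) / (2 * τ ^ 3)

noncomputable def rhoDD (τ s : ℝ) : ℝ := 3 / (2 * τ ^ 3) * max (τ ^ 2 - s ^ 2) 0

variable {τ s : ℝ}

lemma rho_eq_abs (h : τ ≤ |s|) : rho τ s = |s| := if_pos h

lemma rho_eq_poly (hτ : 0 < τ) (h : |s| ≤ τ) :
    rho τ s = -s ^ 4 / (8 * τ ^ 3) + 3 * s ^ 2 / (4 * τ) + 3 * τ / 8 := by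
  unfold rho
  split_ifs with h'
  · have habs : |s| = τ := le_antisymm h h'
    have hs2 : s ^ 2 = τ ^ 2 := by rw [← sq_abs, habs]
    rw [habs]
    have h4 : s ^ 4 = τ ^ 4 := by nlinarith [hs2]
    rw [hs2, h4]
    field_simp
    ring
  · rfl

lemma rhoD_eq_poly (hτ : 0 < τ) (h : |s| ≤ τ) :
    rhoD τ s = s * (3 * τ ^ 2 - s ^ 2) / (2 * τ ^ 3) := by
  unfold rhoD
  split_ifs with h' h2
  · -- |s| = τ, s < 0 so s = -τ
    have habs : |s| = τ := le_antisymm h h'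
    have hs : s = -τ := by rw [abs_of_neg h2] at habs; linarith
    rw [hs]; field_simp; ring
  · have habs : |s| = τ := le_antisymm h h'
    have hs : s = τ := by rw [abs_of_nonneg (not_lt.1 h2)] at habs; exact habs
    rw [hs]; field_simp; ring
  · rfl

lemma rho_ge (hτ : 0 < τ) (s : ℝ) : 3 * τ / 8 ≤ rho τ s := by
  rcases le_or_gt τ |s| with h | h
  · rw [rho_eq_abs h]; linarith
  · rw [rho_eq_poly hτ h.le]
    have hs2 : s ^ 2 ≤ τ ^ 2 := by nlinarith [abs_nonneg s, sq_abs s, h.le]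
    have key : -s ^ 4 / (8 * τ ^ 3) + 3 * s ^ 2 / (4 * τ) + 3 * τ / 8 - 3 * τ / 8
        = s ^ 2 * (6 * τ ^ 2 - s ^ 2) / (8 * τ ^ 3) := by
      field_simp; ring
    nlinarith [sq_nonneg s, pow_pos hτ 3,
      div_nonneg (mul_nonneg (sq_nonneg s) (by nlinarith : (0:ℝ) ≤ 6 * τ ^ 2 - s ^ 2))
        (by positivity : (0:ℝ) ≤ 8 * τ ^ 3)]

lemma rho_pos (hτ : 0 < τ) (s : ℝ) : 0 < rho τ s :=
  lt_of_lt_of_le (by linarith) (rho_ge hτ s)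

lemma mul_rhoD_ge (hτ : 0 < τ) (s : ℝ) : rho τ s - 3 * τ / 8 ≤ s * rhoD τ s := by
  rcases le_or_gt τ |s| with h | h
  · rw [rho_eq_abs h]
    have : s * rhoD τ s = |s| := by
      unfold rhoD
      rw [if_pos h]
      rcases lt_or_ge s 0 with hs | hs
      · rw [if_pos hs, abs_of_neg hs]; ring
      · rw [if_neg (not_lt.2 hs), abs_of_nonneg hs]; ring
    rw [this]; linarith
  · rw [rho_eq_poly hτ h.le, rhoD_eq_poly hτ h.le]
    have hs2 : s ^ 2 ≤ τ ^ 2 := by nlinarith [abs_nonneg s, sq_abs s, h.le]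
    have key : s * (s * (3 * τ ^ 2 - s ^ 2) / (2 * τ ^ 3))
        - (-s ^ 4 / (8 * τ ^ 3) + 3 * s ^ 2 / (4 * τ) + 3 * τ / 8 - 3 * τ / 8)
        = s ^ 2 * (6 * τ ^ 2 - 3 * s ^ 2) / (8 * τ ^ 3) := by
      field_simp; ring
    nlinarith [div_nonneg (mul_nonneg (sq_nonneg s)
        (by nlinarith : (0:ℝ) ≤ 6 * τ ^ 2 - 3 * s ^ 2))
        (by positivity : (0:ℝ) ≤ 8 * τ ^ 3)]

lemma rhoDD_nonneg (hτ : 0 < τ) (s : ℝ) : 0 ≤ rhoDD τ s := by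
  unfold rhoDD; positivity

lemma continuous_rhoDD (hτ : 0 < τ) : Continuous (rhoDD τ) := by
  unfold rhoDD
  fun_prop

/-- derivative of the polynomial part -/
lemma poly_hasDerivAt (hτ : 0 < τ) (s : ℝ) :
    HasDerivAt (fun y : ℝ => -y ^ 4 / (8 * τ ^ 3) + 3 * y ^ 2 / (4 * τ) + 3 * τ / 8)
      (s * (3 * τ ^ 2 - s ^ 2) / (2 * τ ^ 3)) s := by
  have h1 := ((hasDerivAt_pow 4 s).neg.div_const (8 * τ ^ 3))
  have h2 := (((hasDerivAt_pow 2 s).const_mul 3).div_const (4 * τ))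
  have h := (h1.add h2).add_const (3 * τ / 8)
  refine h.congr_deriv ?_
  push_cast
  field_simp
  ring

lemma polyD_hasDerivAt (hτ : 0 < τ) (s : ℝ) :
    HasDerivAt (fun y : ℝ => y * (3 * τ ^ 2 - y ^ 2) / (2 * τ ^ 3))
      (3 / (2 * τ ^ 3) * (τ ^ 2 - s ^ 2)) s := by
  have h : HasDerivAt (fun y : ℝ => y * (3 * τ ^ 2 - y ^ 2) / (2 * τ ^ 3))
      ((1 * (3 * τ ^ 2 - s ^ 2) + s * (0 - 2 * s)) / (2 * τ ^ 3)) s := by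
    apply HasDerivAt.div_const
    exact (hasDerivAt_id s).mul (((hasDerivAt_const s (3*τ^2))).sub
      (by simpa using hasDerivAt_pow 2 s))
  convert h using 1
  field_simp
  ring

lemma hasDerivAt_rho (hτ : 0 < τ) (s : ℝ) : HasDerivAt (rho τ) (rhoD τ s) s := by
  rcases lt_trichotomy (|s|) τ with h | h | h
  · -- interior of polynomial region
    have hopen : ∀ᶠ y in nhds s, rho τ y
        = -y ^ 4 / (8 * τ ^ 3) + 3 * y ^ 2 / (4 * τ) + 3 * τ / 8 := by
      have : ∀ᶠ y in nhds s, |y| < τ :=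
        (continuous_abs.continuousAt).eventually_lt continuousAt_const h
      exact this.mono fun y hy => rho_eq_poly hτ hy.le
    rw [rhoD_eq_poly hτ h.le]
    exact (poly_hasDerivAt hτ s).congr_of_eventuallyEq hopen
  · -- boundary |s| = τ
    have hleft : HasDerivWithinAt (rho τ) (s * (3 * τ ^ 2 - s ^ 2) / (2 * τ ^ 3))
        (Set.Icc (-τ) τ) s := by
      apply ((poly_hasDerivAt hτ s).hasDerivWithinAt).congr
      · intro y hy
        exact rho_eq_poly hτ (abs_le.2 ⟨hy.1, hy.2⟩)
      · exact rho_eq_poly hτ h.le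
    rw [rhoD_eq_poly hτ h.le]
    rcases (abs_eq hτ.le).1 h with hs | hs
    · -- s = τ : right part Ici τ, rho = id there
      rw [hs]
      rw [hs] at hleft
      have hval : τ * (3 * τ ^ 2 - τ ^ 2) / (2 * τ ^ 3) = 1 := by field_simp; ring
      rw [hval] at hleft ⊢
      have hright : HasDerivWithinAt (rho τ) 1 (Set.Ici τ) τ := by
        apply (hasDerivWithinAt_id τ (Set.Ici τ)).congr
        · intro y hy
          have hy' : τ ≤ y := hy
          have hypos : 0 < y := lt_of_lt_of_le hτ hy'
          rw [rho_eq_abs (by rw [abs_of_pos hypos]; exact hy'), abs_of_pos hypos]; rfl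
        · rw [rho_eq_abs (le_of_eq (abs_of_pos hτ).symm), abs_of_pos hτ]; rfl
      have hu := hleft.union hright
      rw [Set.Icc_union_Ici_eq_Ici (by linarith : -τ ≤ τ)] at hu
      exact hu.hasDerivAt (Ici_mem_nhds (by linarith : -τ < τ))
    · -- s = -τ
      rw [hs]
      rw [hs] at hleft
      have hval : -τ * (3 * τ ^ 2 - (-τ) ^ 2) / (2 * τ ^ 3) = -1 := by field_simp; ring
      rw [hval] at hleft ⊢
      have hright : HasDerivWithinAt (rho τ) (-1) (Set.Iic (-τ)) (-τ) := by
        apply ((hasDerivWithinAt_id (-τ) (Set.Iic (-τ))).neg).congr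
        · intro y hy
          have hy' : y ≤ -τ := hy
          have hyneg : y < 0 := lt_of_le_of_lt hy' (by linarith)
          rw [rho_eq_abs (by rw [abs_of_neg hyneg]; linarith), abs_of_neg hyneg]; rfl
        · have hn : (-τ:ℝ) < 0 := by linarith
          rw [rho_eq_abs (by rw [abs_of_neg hn]; linarith), abs_of_neg hn]; rfl
      have hu := hright.union hleft
      rw [Set.Iic_union_Icc_eq_Iic (by linarith : -τ ≤ τ)] at hu
      exact hu.hasDerivAt (Iic_mem_nhds (by linarith : -τ < τ))
  · -- |s| > τ: rho = abs locally
    have hne : s ≠ 0 := by intro h0; rw [h0, abs_zero] at h; linarith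
    have hopen : ∀ᶠ y in nhds s, rho τ y = |y| := by
      have : ∀ᶠ y in nhds s, τ < |y| :=
        ContinuousAt.eventually_lt continuousAt_const (continuous_abs.continuousAt) h
      exact this.mono fun y hy => rho_eq_abs hy.le
    rcases lt_or_gt_of_ne hne with hneg | hpos
    · have : rhoD τ s = -1 := by unfold rhoD; rw [if_pos h.le, if_pos hneg]
      rw [this]
      have habs : HasDerivAt (fun y : ℝ => |y|) (-1) s := by
        have : ∀ᶠ y in nhds s, |y| = -y := by
          filter_upwards [eventually_lt_nhds hneg] with y hy
          exact abs_of_neg hy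
        exact ((hasDerivAt_id s).neg).congr_of_eventuallyEq this
      exact habs.congr_of_eventuallyEq hopen
    · have : rhoD τ s = 1 := by unfold rhoD; rw [if_pos h.le, if_neg (not_lt.2 hpos.le)]
      rw [this]
      have habs : HasDerivAt (fun y : ℝ => |y|) 1 s := by
        have : ∀ᶠ y in nhds s, |y| = y := by
          filter_upwards [eventually_gt_nhds hpos] with y hy
          exact abs_of_pos hy
        exact (hasDerivAt_id s).congr_of_eventuallyEq this
      exact habs.congr_of_eventuallyEq hopen

lemma rhoD_eq_one (hτ : 0 < τ) (h : τ ≤ s) : rhoD τ s = 1 := by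
  unfold rhoD
  rw [if_pos (by rw [abs_of_pos (lt_of_lt_of_le hτ h)]; exact h),
    if_neg (not_lt.2 (le_trans hτ.le h))]

lemma rhoD_eq_neg_one (hτ : 0 < τ) (h : s ≤ -τ) : rhoD τ s = -1 := by
  have hneg : s < 0 := lt_of_le_of_lt h (by linarith)
  unfold rhoD
  rw [if_pos (by rw [abs_of_neg hneg]; linarith), if_pos hneg]

lemma rhoDD_eq_of_le (h : s ^ 2 ≤ τ ^ 2) : rhoDD τ s = 3 / (2 * τ ^ 3) * (τ ^ 2 - s ^ 2) := by
  unfold rhoDD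
  rw [max_eq_left (by linarith)]

lemma rhoDD_eq_zero (h : τ ^ 2 ≤ s ^ 2) : rhoDD τ s = 0 := by
  unfold rhoDD
  rw [max_eq_right (by linarith), mul_zero]

lemma hasDerivAt_rhoD (hτ : 0 < τ) (s : ℝ) : HasDerivAt (rhoD τ) (rhoDD τ s) s := by
  rcases lt_trichotomy (|s|) τ with h | h | h
  · have hs2 : s ^ 2 < τ ^ 2 := by nlinarith [abs_nonneg s, sq_abs s]
    have hopen : ∀ᶠ y in nhds s, rhoD τ y = y * (3 * τ ^ 2 - y ^ 2) / (2 * τ ^ 3) := by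
      have : ∀ᶠ y in nhds s, |y| < τ :=
        ContinuousAt.eventually_lt (continuous_abs.continuousAt) continuousAt_const h
      exact this.mono fun y hy => rhoD_eq_poly hτ hy.le
    rw [rhoDD_eq_of_le hs2.le]
    exact (polyD_hasDerivAt hτ s).congr_of_eventuallyEq hopen
  · -- boundary
    have hs2 : s ^ 2 = τ ^ 2 := by rw [← sq_abs, h]
    have hleft : HasDerivWithinAt (rhoD τ) (rhoDD τ s) (Set.Icc (-τ) τ) s := by
      have hval : rhoDD τ s = 3 / (2 * τ ^ 3) * (τ ^ 2 - s ^ 2) := rhoDD_eq_of_le hs2.le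
      rw [hval]
      apply ((polyD_hasDerivAt hτ s).hasDerivWithinAt).congr
      · intro y hy
        exact rhoD_eq_poly hτ (abs_le.2 ⟨hy.1, hy.2⟩)
      · exact rhoD_eq_poly hτ h.le
    have hDD0 : rhoDD τ s = 0 := rhoDD_eq_zero hs2.ge
    rcases (abs_eq hτ.le).1 h with hs | hs
    · rw [hs] at hleft ⊢
      have hright : HasDerivWithinAt (rhoD τ) (rhoDD τ τ) (Set.Ici τ) τ := by
        rw [hs] at hDD0
        rw [hDD0]
        apply (hasDerivWithinAt_const τ (Set.Ici τ) (1:ℝ)).congr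
        · intro y hy; exact rhoD_eq_one hτ hy
        · exact rhoD_eq_one hτ le_rfl
      have hu := hleft.union hright
      rw [Set.Icc_union_Ici_eq_Ici (by linarith : -τ ≤ τ)] at hu
      exact hu.hasDerivAt (Ici_mem_nhds (by linarith : -τ < τ))
    · rw [hs] at hleft ⊢
      have hright : HasDerivWithinAt (rhoD τ) (rhoDD τ (-τ)) (Set.Iic (-τ)) (-τ) := by
        rw [hs] at hDD0
        rw [hDD0]
        apply (hasDerivWithinAt_const (-τ) (Set.Iic (-τ)) (-1:ℝ)).congr
        · intro y hy; exact rhoD_eq_neg_one hτ hy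
        · exact rhoD_eq_neg_one hτ le_rfl
      have hu := hright.union hleft
      rw [Set.Iic_union_Icc_eq_Iic (by linarith : -τ ≤ τ)] at hu
      exact hu.hasDerivAt (Iic_mem_nhds (by linarith : -τ < τ))
  · -- outside
    have hs2 : τ ^ 2 < s ^ 2 := by nlinarith [abs_nonneg s, sq_abs s]
    rw [rhoDD_eq_zero hs2.le]
    rcases lt_or_gt_of_ne (fun h0 => by rw [h0, abs_zero] at h; linarith : s ≠ 0) with hneg | hpos
    · have hopen : ∀ᶠ y in nhds s, rhoD τ y = -1 := by
        have hlt : s < -τ := by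
          have := abs_of_neg hneg; rw [this] at h; linarith
        filter_upwards [eventually_lt_nhds hlt] with y hy
        exact rhoD_eq_neg_one hτ hy.le
      exact (hasDerivAt_const s (-1:ℝ)).congr_of_eventuallyEq hopen
    · have hopen : ∀ᶠ y in nhds s, rhoD τ y = 1 := by
        have hlt : τ < s := by
          have := abs_of_pos hpos; rw [this] at h; linarith
        filter_upwards [eventually_gt_nhds hlt] with y hy
        exact rhoD_eq_one hτ hy.le
      exact (hasDerivAt_const s (1:ℝ)).congr_of_eventuallyEq hopen

lemma continuous_rho {τ : ℝ} (hτ : 0 < τ) : Continuous (rho τ) :=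
  Differentiable.continuous (fun s => (hasDerivAt_rho hτ s).differentiableAt)

lemma continuous_rhoD {τ : ℝ} (hτ : 0 < τ) : Continuous (rhoD τ) :=
  Differentiable.continuous (fun s => (hasDerivAt_rhoD hτ s).differentiableAt)


/-- A classical solution of the target system
`u_t = u_xx - lam·u` on `(0,1)×(0,∞)` with Neumann boundary conditions. -/
structure TargetSol (lam u ut ux uxx : ℝ → ℝ → ℝ) : Prop where
  cont : ContinuousOn (fun q : ℝ × ℝ => u q.1 q.2) (Set.Icc 0 1 ×ˢ Set.Ici 0)
  deriv_t : ∀ x ∈ Set.Icc (0:ℝ) 1, ∀ t ∈ Set.Ioi (0:ℝ), HasDerivAt (fun s => u x s) (ut x t) t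
  deriv_x : ∀ x ∈ Set.Icc (0:ℝ) 1, ∀ t ∈ Set.Ioi (0:ℝ), HasDerivAt (fun y => u y t) (ux x t) x
  deriv_xx : ∀ x ∈ Set.Icc (0:ℝ) 1, ∀ t ∈ Set.Ioi (0:ℝ), HasDerivAt (fun y => ux y t) (uxx x t) x
  cont_ut : ContinuousOn (fun q : ℝ × ℝ => ut q.1 q.2) (Set.Icc 0 1 ×ˢ Set.Ioi 0)
  cont_ux : ContinuousOn (fun q : ℝ × ℝ => ux q.1 q.2) (Set.Icc 0 1 ×ˢ Set.Ioi 0)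
  cont_uxx : ContinuousOn (fun q : ℝ × ℝ => uxx q.1 q.2) (Set.Icc 0 1 ×ˢ Set.Ioi 0)
  pde : ∀ x ∈ Set.Ioo (0:ℝ) 1, ∀ t ∈ Set.Ioi (0:ℝ), ut x t = uxx x t - lam x t * u x t
  bc0 : ∀ t ∈ Set.Ioi (0:ℝ), ux 0 t = 0
  bc1 : ∀ t ∈ Set.Ioi (0:ℝ), ux 1 t = 0

theorem stmt5 (lam u ut ux uxx : ℝ → ℝ → ℝ) (lamb : ℝ) (hlamb : 0 < lamb)
    (hlam_cont : ContinuousOn (fun q : ℝ × ℝ => lam q.1 q.2) (Set.Icc 0 1 ×ˢ Set.Ici 0))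
    (hlam_ge : ∀ x ∈ Set.Icc (0:ℝ) 1, ∀ t ∈ Set.Ici (0:ℝ), lamb ≤ lam x t)
    (hu : TargetSol lam u ut ux uxx)
    (τ : ℝ) (hτ : 0 < τ) (p : ℝ) (hp : 1 ≤ p) (t : ℝ) (ht : 0 < t) :
    ∃ d : ℝ,
      HasDerivAt (fun s => ∫ x in (0:ℝ)..1, rho τ (u x s) ^ p) d t ∧
      d ≤ -lamb * p * (∫ x in (0:ℝ)..1, rho τ (u x t) ^ p)
          + 3 / 8 * τ * p * ∫ x in (0:ℝ)..1, lam x t * rho τ (u x t) ^ (p - 1) := by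
  have hp0 : 0 < p := lt_of_lt_of_le one_pos hp
  have hIcc : Set.uIcc (0:ℝ) 1 = Set.Icc 0 1 := Set.uIcc_of_le zero_le_one
  have hIoc : Set.uIoc (0:ℝ) 1 = Set.Ioc 0 1 := Set.uIoc_of_le zero_le_one
  -- generic helpers
  have hInt : ∀ f : ℝ → ℝ, ContinuousOn f (Set.Icc 0 1) → IntervalIntegrable f volume 0 1 := by
    intro f hf
    apply ContinuousOn.intervalIntegrable
    rwa [hIcc]
  have hMeas : ∀ f : ℝ → ℝ, ContinuousOn f (Set.Icc 0 1) →
      AEStronglyMeasurable f (volume.restrict (Set.uIoc (0:ℝ) 1)) := by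
    intro f hf
    rw [hIoc]
    exact (hf.mono Set.Ioc_subset_Icc_self).aestronglyMeasurable measurableSet_Ioc
  -- slices
  have hslice : ∀ (w : ℝ → ℝ → ℝ),
      ContinuousOn (fun q : ℝ × ℝ => w q.1 q.2) (Set.Icc 0 1 ×ˢ Set.Ici 0) →
      ∀ s : ℝ, 0 ≤ s → ContinuousOn (fun x => w x s) (Set.Icc 0 1) := by
    intro w hw s hs
    exact hw.comp ((continuous_id.prodMk continuous_const).continuousOn)
      (fun x hx => Set.mem_prod.2 ⟨hx, hs⟩)
  have hslice' : ∀ (w : ℝ → ℝ → ℝ),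
      ContinuousOn (fun q : ℝ × ℝ => w q.1 q.2) (Set.Icc 0 1 ×ˢ Set.Ioi 0) →
      ∀ s : ℝ, 0 < s → ContinuousOn (fun x => w x s) (Set.Icc 0 1) := by
    intro w hw s hs
    exact hw.comp ((continuous_id.prodMk continuous_const).continuousOn)
      (fun x hx => Set.mem_prod.2 ⟨hx, hs⟩)
  have cu : ContinuousOn (fun x => u x t) (Set.Icc 0 1) := hslice u hu.cont t ht.le
  have cut : ContinuousOn (fun x => ut x t) (Set.Icc 0 1) := hslice' ut hu.cont_ut t ht
  have cux : ContinuousOn (fun x => ux x t) (Set.Icc 0 1) := hslice' ux hu.cont_ux t ht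
  have cuxx : ContinuousOn (fun x => uxx x t) (Set.Icc 0 1) := hslice' uxx hu.cont_uxx t ht
  have clam : ContinuousOn (fun x => lam x t) (Set.Icc 0 1) := hslice lam hlam_cont t ht.le
  have cR : ContinuousOn (fun x => rho τ (u x t)) (Set.Icc 0 1) :=
    (continuous_rho hτ).comp_continuousOn cu
  have cD : ContinuousOn (fun x => rhoD τ (u x t)) (Set.Icc 0 1) :=
    (continuous_rhoD hτ).comp_continuousOn cu
  have cDD : ContinuousOn (fun x => rhoDD τ (u x t)) (Set.Icc 0 1) :=
    (continuous_rhoDD hτ).comp_continuousOn cu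
  have cRe : ∀ e : ℝ, ContinuousOn (fun x => rho τ (u x t) ^ e) (Set.Icc 0 1) := fun e =>
    cR.rpow_const (fun x _ => Or.inl (rho_pos hτ _).ne')
  -- Step 1: differentiation under the integral sign
  set F' : ℝ → ℝ → ℝ :=
    fun s x => rhoD τ (u x s) * ut x s * p * rho τ (u x s) ^ (p - 1) with hF'def
  have hball : ∀ s ∈ Metric.ball t (t / 2), 0 < s ∧ t / 2 ≤ s ∧ s ≤ t + t / 2 := by
    intro s hs
    rw [Metric.mem_ball, Real.dist_eq, abs_lt] at hs
    exact ⟨by linarith [hs.1], by linarith [hs.1], by linarith [hs.2]⟩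
  -- compact bound
  obtain ⟨C, hC⟩ : ∃ C, ∀ q ∈ Set.Icc (0:ℝ) 1 ×ˢ Set.Icc (t/2) (t + t/2),
      ‖rhoD τ (u q.1 q.2) * ut q.1 q.2 * p * rho τ (u q.1 q.2) ^ (p - 1)‖ ≤ C := by
    apply IsCompact.exists_bound_of_continuousOn (isCompact_Icc.prod isCompact_Icc)
    have hsub : Set.Icc (0:ℝ) 1 ×ˢ Set.Icc (t/2) (t + t/2) ⊆ Set.Icc 0 1 ×ˢ Set.Ioi 0 := by
      apply Set.prod_mono_right
      intro s hs
      exact lt_of_lt_of_le (by linarith) hs.1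
    have hsub' : Set.Icc (0:ℝ) 1 ×ˢ Set.Icc (t/2) (t + t/2) ⊆ Set.Icc 0 1 ×ˢ Set.Ici 0 := by
      apply Set.prod_mono_right
      intro s hs
      exact le_trans (by linarith) hs.1
    have cuQ : ContinuousOn (fun q : ℝ × ℝ => u q.1 q.2)
        (Set.Icc (0:ℝ) 1 ×ˢ Set.Icc (t/2) (t + t/2)) := hu.cont.mono hsub'
    have cutQ : ContinuousOn (fun q : ℝ × ℝ => ut q.1 q.2)
        (Set.Icc (0:ℝ) 1 ×ˢ Set.Icc (t/2) (t + t/2)) := hu.cont_ut.mono hsub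
    exact ((((continuous_rhoD hτ).comp_continuousOn cuQ).mul cutQ).mul continuousOn_const).mul
      (((continuous_rho hτ).comp_continuousOn cuQ).rpow_const
        (fun q _ => Or.inl (rho_pos hτ _).ne'))
  have key := intervalIntegral.hasDerivAt_integral_of_dominated_loc_of_deriv_le
    (F := fun s x => rho τ (u x s) ^ p) (F' := F') (x₀ := t) (a := 0) (b := 1)
    (μ := volume) (bound := fun _ => C) (Metric.ball_mem_nhds t (half_pos ht))
    (by -- hF_meas
      filter_upwards [eventually_gt_nhds ht] with s hs
      exact hMeas _ (((continuous_rho hτ).comp_continuousOn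
        (hslice u hu.cont s hs.le)).rpow_const (fun x _ => Or.inl (rho_pos hτ _).ne')))
    (hInt _ (((continuous_rho hτ).comp_continuousOn cu).rpow_const
        (fun x _ => Or.inl (rho_pos hτ _).ne')))
    (by -- hF'_meas
      exact hMeas _ ((((continuous_rhoD hτ).comp_continuousOn cu).mul cut).mul
        continuousOn_const |>.mul (cRe (p-1))))
    (by -- h_bound
      apply Filter.Eventually.of_forall
      intro x hx s hs
      rcases hball s hs with ⟨hs0, hs1, hs2⟩
      have hx' : x ∈ Set.Icc (0:ℝ) 1 := Set.Ioc_subset_Icc_self (hIoc ▸ hx)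
      exact hC (x, s) (Set.mem_prod.2 ⟨hx', ⟨hs1, hs2⟩⟩))
    intervalIntegrable_const
    (by -- h_diff
      apply Filter.Eventually.of_forall
      intro x hx s hs
      have hx' : x ∈ Set.Icc (0:ℝ) 1 := Set.Ioc_subset_Icc_self (hIoc ▸ hx)
      have hs0 : 0 < s := (hball s hs).1
      have h1 : HasDerivAt (fun s' => rho τ (u x s')) (rhoD τ (u x s) * ut x s) s :=
        (hasDerivAt_rho hτ (u x s)).comp s (hu.deriv_t x hx' s hs0)
      exact h1.rpow_const (Or.inl (rho_pos hτ _).ne'))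
  obtain ⟨-, hderiv⟩ := key
  refine ⟨∫ x in (0:ℝ)..1, F' t x, hderiv, ?_⟩
  -- Step 2: bound the derivative
  set Qq : ℝ → ℝ := fun x => p * ((p - 1) * rho τ (u x t) ^ (p - 2) * rhoD τ (u x t) ^ 2
      + rho τ (u x t) ^ (p - 1) * rhoDD τ (u x t)) * ux x t ^ 2 with hQdef
  set B : ℝ → ℝ := fun x => p * rho τ (u x t) ^ (p - 1) * rhoD τ (u x t) * uxx x t with hBdef
  set Cf : ℝ → ℝ :=
    fun x => -(lam x t * (p * rho τ (u x t) ^ (p - 1) * rhoD τ (u x t) * u x t)) with hCdef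
  have cQ : ContinuousOn Qq (Set.Icc 0 1) :=
    ((continuousOn_const.mul (((continuousOn_const.mul (cRe (p-2))).mul (cD.pow 2)).add
      ((cRe (p-1)).mul cDD))).mul (cux.pow 2))
  have cB : ContinuousOn B (Set.Icc 0 1) :=
    ((continuousOn_const.mul (cRe (p-1))).mul cD).mul cuxx
  have cC : ContinuousOn Cf (Set.Icc 0 1) :=
    (clam.mul (((continuousOn_const.mul (cRe (p-1))).mul cD).mul cu)).neg
  -- integration by parts
  have hW : ∀ x ∈ Set.uIcc (0:ℝ) 1,
      HasDerivAt (fun y => p * rho τ (u y t) ^ (p - 1) * rhoD τ (u y t) * ux y t)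
        (Qq x + B x) x := by
    intro x hx0
    have hx : x ∈ Set.Icc (0:ℝ) 1 := hIcc ▸ hx0
    have h1 : HasDerivAt (fun y => u y t) (ux x t) x := hu.deriv_x x hx t ht
    have hr : HasDerivAt (fun y => rho τ (u y t)) (rhoD τ (u x t) * ux x t) x := by
      have := (hasDerivAt_rho hτ (u x t)).comp x h1; exact this
    have hrp := hr.rpow_const (p := p - 1) (Or.inl (rho_pos hτ _).ne')
    have hrd : HasDerivAt (fun y => rhoD τ (u y t)) (rhoDD τ (u x t) * ux x t) x := by
      have := (hasDerivAt_rhoD hτ (u x t)).comp x h1; exact this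
    have hx2 : HasDerivAt (fun y => ux y t) (uxx x t) x := hu.deriv_xx x hx t ht
    have h := ((hrp.const_mul p).mul hrd).mul hx2
    refine h.congr_deriv ?_
    rw [show p - 1 - 1 = p - 2 by ring]
    simp only [hQdef, hBdef, Pi.mul_apply]
    ring
  have hFTC := intervalIntegral.integral_eq_sub_of_hasDerivAt hW
    (hInt _ (cQ.add cB))
  have hWval : (∫ x in (0:ℝ)..1, (Qq x + B x)) = 0 := by
    rw [hFTC, hu.bc1 t ht, hu.bc0 t ht]
    ring
  have hQint := hInt _ cQ
  have hBint := hInt _ cB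
  have hCint := hInt _ cC
  have hQnonneg : (0:ℝ) ≤ ∫ x in (0:ℝ)..1, Qq x := by
    apply intervalIntegral.integral_nonneg zero_le_one
    intro x _
    have h1 : (0:ℝ) ≤ rho τ (u x t) ^ (p - 2) := Real.rpow_nonneg (rho_pos hτ _).le _
    have h2 : (0:ℝ) ≤ rho τ (u x t) ^ (p - 1) := Real.rpow_nonneg (rho_pos hτ _).le _
    have h3 := rhoDD_nonneg hτ (u x t)
    have h4 : (0:ℝ) ≤ p - 1 := by linarith
    simp only [hQdef]
    apply mul_nonneg (mul_nonneg hp0.le _) (sq_nonneg _)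
    exact add_nonneg (mul_nonneg (mul_nonneg h4 h1) (sq_nonneg _)) (mul_nonneg h2 h3)
  have hB_le : (∫ x in (0:ℝ)..1, B x) ≤ 0 := by
    have := intervalIntegral.integral_add hQint hBint
    rw [hWval] at this
    linarith
  -- split d
  have h1ae : ∀ᵐ x : ℝ ∂volume, x ≠ (1:ℝ) := by
    rw [MeasureTheory.ae_iff]
    simp only [not_not, Set.setOf_eq_eq_singleton]
    exact measure_singleton 1
  have hcongr : (∫ x in (0:ℝ)..1, F' t x) = ∫ x in (0:ℝ)..1, (B x + Cf x) := by
    apply intervalIntegral.integral_congr_ae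
    filter_upwards [h1ae] with x hx1 hxI
    have hxI' : x ∈ Set.Ioc (0:ℝ) 1 := hIoc ▸ hxI
    have hxo : x ∈ Set.Ioo (0:ℝ) 1 := ⟨hxI'.1, lt_of_le_of_ne hxI'.2 hx1⟩
    simp only [hF'def, hBdef, hCdef]
    rw [hu.pde x hxo t ht]
    ring
  have hd : (∫ x in (0:ℝ)..1, F' t x)
      = (∫ x in (0:ℝ)..1, B x) + ∫ x in (0:ℝ)..1, Cf x := by
    rw [hcongr]
    exact intervalIntegral.integral_add hBint hCint
  -- bound the reaction term
  have hC_le : (∫ x in (0:ℝ)..1, Cf x)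
      ≤ ∫ x in (0:ℝ)..1, (-lamb * p * rho τ (u x t) ^ p
          + 3 / 8 * τ * p * (lam x t * rho τ (u x t) ^ (p - 1))) := by
    apply intervalIntegral.integral_mono_on zero_le_one hCint
    · exact hInt _ ((continuousOn_const.mul (cRe p)).add
        (continuousOn_const.mul (clam.mul (cRe (p-1)))))
    intro x hx
    have hA : lamb ≤ lam x t := hlam_ge x hx t ht.le
    have hRpos := rho_pos hτ (u x t)
    have hR1 : (0:ℝ) ≤ rho τ (u x t) ^ (p - 1) := Real.rpow_nonneg hRpos.le _
    have hRp : rho τ (u x t) ^ p = rho τ (u x t) ^ (p - 1) * rho τ (u x t) := by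
      nth_rewrite 1 [show p = (p - 1) + 1 by ring]
      rw [Real.rpow_add_one hRpos.ne']
    have hM := mul_rhoD_ge hτ (u x t)
    have hRge := rho_ge hτ (u x t)
    simp only [hCdef]
    rw [hRp]
    have hApos : (0:ℝ) < lam x t := lt_of_lt_of_le hlamb hA
    have t1 := mul_le_mul_of_nonneg_left hM
      (mul_nonneg (mul_nonneg hApos.le hp0.le) hR1)
    have t2 := mul_le_mul_of_nonneg_right hA
      (mul_nonneg (mul_nonneg hp0.le hR1) hRpos.le)
    nlinarith [t1, t2]
  have hsum : (∫ x in (0:ℝ)..1, (-lamb * p * rho τ (u x t) ^ p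
          + 3 / 8 * τ * p * (lam x t * rho τ (u x t) ^ (p - 1))))
      = -lamb * p * (∫ x in (0:ℝ)..1, rho τ (u x t) ^ p)
        + 3 / 8 * τ * p * ∫ x in (0:ℝ)..1, lam x t * rho τ (u x t) ^ (p - 1) := by
    rw [intervalIntegral.integral_add (f := fun x => -lamb * p * rho τ (u x t) ^ p)
      (g := fun x => 3 / 8 * τ * p * (lam x t * rho τ (u x t) ^ (p - 1))) (hInt _ (continuousOn_const.mul (cRe p)))
      (hInt _ (continuousOn_const.mul (clam.mul (cRe (p-1)))))]
    rw [intervalIntegral.integral_const_mul, intervalIntegral.integral_const_mul]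
  rw [hd]
  rw [hsum] at hC_le
  linarith
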